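/- Let M be a k×k integer matrix with det(I − M) ≠ 0. Let p be the number of real eigenvalues μ of M (counted with algebraic multiplicity) with μ < −1, and r the number of real eigenvalues of M (with multiplicity) whose absolute value is > 1. Then |det(I − M)| = (−1)^{r+p} · Σ_{i=0}^{k} (−1)^i Tr(Λ^i M), where Λ^i M denotes the induced map on the i-th exterior power. -/

import Mathlib

open Polynomial

section Aux

variable {R : Type*} [CommRing R]

/-- det of a matrix that agrees with the identity off `t` equals the det of its
principal submatrix on `t`. -/
lemma det_eq_det_submatrix {k : ℕ} (N : Matrix (Fin k) (Fin k) R) (t : Finset (Fin k))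
    (hN : ∀ i, i ∉ t → ∀ j, N i j = (1 : Matrix (Fin k) (Fin k) R) i j) :
    N.det = (N.submatrix (fun x : {x // x ∈ t} => (x : Fin k))
      (fun x : {x // x ∈ t} => (x : Fin k))).det := by
  classical
  rw [← Matrix.det_submatrix_equiv_self (Equiv.sumCompl (· ∈ t)) N]
  have : N.submatrix (Equiv.sumCompl (· ∈ t)) (Equiv.sumCompl (· ∈ t)) =
      Matrix.fromBlocks
        (N.submatrix (fun x : {x // x ∈ t} => (x : Fin k)) (fun x : {x // x ∈ t} => (x : Fin k)))
        (N.submatrix (fun x : {x // x ∈ t} => (x : Fin k)) (fun x : {x // ¬ x ∈ t} => (x : Fin k)))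
        0 1 := by
    ext a b
    cases a with
    | inl a =>
      cases b with
      | inl b => rfl
      | inr b => rfl
    | inr a =>
      cases b with
      | inl b =>
        simp only [Matrix.submatrix_apply, Equiv.sumCompl_apply_inr, Equiv.sumCompl_apply_inl,
          Matrix.fromBlocks_apply₂₁, Matrix.zero_apply]
        rw [hN a a.2 b, Matrix.one_apply_ne]
        exact fun h => a.2 (h ▸ b.2)
      | inr b =>
        simp only [Matrix.submatrix_apply, Equiv.sumCompl_apply_inr,
          Matrix.fromBlocks_apply₂₂]
        rw [hN a a.2 b]
        simp [Matrix.one_apply, Subtype.ext_iff]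
  rw [this, Matrix.det_fromBlocks_zero₂₁, Matrix.det_one, mul_one]

lemma det_one_sub_expand {k : ℕ} (M : Matrix (Fin k) (Fin k) R) :
    (1 - M).det = ∑ s : Finset (Fin k), (-1 : R) ^ (s.card) *
      (M.submatrix (fun x : {x // x ∈ s} => (x : Fin k))
        (fun x : {x // x ∈ s} => (x : Fin k))).det := by
  classical
  have h0 : (1 - M).det = Matrix.detRowAlternating
      ((fun i => (1 : Matrix (Fin k) (Fin k) R) i) + fun i => (-M) i) := by
    congr 1
    ext i j
    simp [sub_eq_add_neg]
  refine h0.trans ((Matrix.detRowAlternating.toMultilinearMap.map_add_univ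
      (fun i => (1 : Matrix (Fin k) (Fin k) R) i) (fun i => (-M) i)).trans ?_)
  have hterm : ∀ s : Finset (Fin k),
      Matrix.detRowAlternating
        (s.piecewise (fun i => (1 : Matrix (Fin k) (Fin k) R) i) (fun i => (-M) i)) =
      (-1 : R) ^ (sᶜ.card) *
        (M.submatrix (fun x : {x // x ∈ sᶜ} => (x : Fin k))
          (fun x : {x // x ∈ sᶜ} => (x : Fin k))).det := by
    intro s
    have h1 : Matrix.detRowAlternating
        (s.piecewise (fun i => (1 : Matrix (Fin k) (Fin k) R) i) (fun i => (-M) i)) =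
        Matrix.det (Matrix.of (s.piecewise (fun i => (1 : Matrix (Fin k) (Fin k) R) i)
          (fun i => (-M) i))) := rfl
    rw [h1, det_eq_det_submatrix _ sᶜ (by
      intro i hi j
      have hi' : i ∈ s := by simpa using hi
      simp [Finset.piecewise_eq_of_mem _ _ _ hi'])]
    have h2 : (Matrix.of (s.piecewise (fun i => (1 : Matrix (Fin k) (Fin k) R) i)
          (fun i => (-M) i))).submatrix (fun x : {x // x ∈ sᶜ} => (x : Fin k))
          (fun x : {x // x ∈ sᶜ} => (x : Fin k)) =
        -(M.submatrix (fun x : {x // x ∈ sᶜ} => (x : Fin k))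
          (fun x : {x // x ∈ sᶜ} => (x : Fin k))) := by
      ext a b
      simp only [Matrix.submatrix_apply, Matrix.neg_apply, Matrix.of_apply]
      rw [Finset.piecewise_eq_of_notMem _ _ _ (Finset.mem_compl.mp a.2)]
      rfl
    rw [h2, Matrix.det_neg]
    congr 1
    rw [Fintype.card_coe]
  refine Eq.trans (Finset.sum_congr rfl (fun s _ => hterm s)) ?_
  exact Fintype.sum_equiv
    (Function.Involutive.toPerm (fun s : Finset (Fin k) => sᶜ)
      (fun s => compl_compl s)) _ _ (fun x => rfl)

end Aux

/-- The `i`-th exterior power (compound matrix) of a `k×k` matrix `M`: the matrix of the induced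
map on the `i`-th exterior power, with entries the `i×i` minors of `M` indexed by cardinality-`i`
subsets (listed in increasing order). -/
noncomputable def extPow {k : ℕ} {R : Type*} [CommRing R] (M : Matrix (Fin k) (Fin k) R)
    (i : ℕ) :
    Matrix {s : Finset (Fin k) // s.card = i} {s : Finset (Fin k) // s.card = i} R :=
  fun s t => (Matrix.of fun a b : Fin i =>
    M (s.1.orderIsoOfFin s.2 a) (t.1.orderIsoOfFin t.2 b)).det

section Aux2

variable {R : Type*} [CommRing R]

lemma trace_extPow {k : ℕ} (M : Matrix (Fin k) (Fin k) R) (i : ℕ) :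
    (extPow M i).trace = ∑ s ∈ Finset.univ.filter (fun s : Finset (Fin k) => s.card = i),
      (M.submatrix (fun x : {x // x ∈ s} => (x : Fin k))
        (fun x : {x // x ∈ s} => (x : Fin k))).det := by
  classical
  rw [Matrix.trace]
  rw [Finset.sum_subtype (Finset.univ.filter (fun s : Finset (Fin k) => s.card = i))
    (p := fun s : Finset (Fin k) => s.card = i) (by simp)
    (f := fun s : Finset (Fin k) => (M.submatrix (fun x : {x // x ∈ s} => (x : Fin k))
      (fun x : {x // x ∈ s} => (x : Fin k))).det)]
  refine Finset.sum_congr rfl (fun s _ => ?_)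
  show extPow M i s s = _
  rw [show extPow M i s s = ((M.submatrix (fun x : {x // x ∈ s.1} => (x : Fin k))
      (fun x : {x // x ∈ s.1} => (x : Fin k))).submatrix (s.1.orderIsoOfFin s.2)
      (s.1.orderIsoOfFin s.2)).det from rfl]
  exact Matrix.det_submatrix_equiv_self (s.1.orderIsoOfFin s.2).toEquiv _

lemma det_one_sub_eq_sum {k : ℕ} (M : Matrix (Fin k) (Fin k) R) :
    (1 - M).det = ∑ i ∈ Finset.range (k + 1), (-1 : R) ^ i * (extPow M i).trace := by
  classical
  rw [det_one_sub_expand]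
  rw [show (∑ i ∈ Finset.range (k + 1), (-1 : R) ^ i * (extPow M i).trace) =
      ∑ i ∈ Finset.range (k + 1), ∑ s ∈ Finset.univ.filter
        (fun s : Finset (Fin k) => s.card = i), (-1 : R) ^ s.card *
        (M.submatrix (fun x : {x // x ∈ s} => (x : Fin k))
          (fun x : {x // x ∈ s} => (x : Fin k))).det from
    Finset.sum_congr rfl fun i _ => by
      rw [trace_extPow, Finset.mul_sum]
      exact Finset.sum_congr rfl fun s hs => by
        rw [(Finset.mem_filter.mp hs).2]]
  rw [Finset.sum_fiberwise_of_maps_to (fun s _ => Finset.mem_range.mpr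
    (Nat.lt_succ_of_le (by simpa using Finset.card_le_univ s)))]

end Aux2

/-- A monic real polynomial with no real roots is positive everywhere. -/
lemma pos_of_no_roots (q : ℝ[X]) (hm : q.Monic) (hr : ∀ x : ℝ, ¬ q.IsRoot x) (y : ℝ) :
    0 < q.eval y := by
  by_contra h
  push_neg at h
  have hy : q.eval y < 0 := lt_of_le_of_ne h (fun he => hr y (by simpa using he))
  rcases Nat.eq_zero_or_pos q.natDegree with h0 | h0
  · have : q = 1 := (Polynomial.Monic.natDegree_eq_zero hm).mp h0
    rw [this] at hy; simp at hy; linarith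
  · have hdeg : 0 < q.degree := by
      rw [Polynomial.degree_eq_natDegree hm.ne_zero]; exact_mod_cast h0
    have htend := Polynomial.tendsto_atTop_of_leadingCoeff_nonneg q hdeg
      (by rw [hm.leadingCoeff]; norm_num)
    obtain ⟨x, hx1, hx2⟩ :=
      ((htend.eventually_ge_atTop 1).and (Filter.eventually_ge_atTop y)).exists
    have hcont : ContinuousOn (fun t => q.eval t) (Set.Icc y x) :=
      (Polynomial.continuous q).continuousOn
    have : (0:ℝ) ∈ Set.Icc (q.eval y) (q.eval x) := ⟨hy.le, by linarith⟩
    obtain ⟨c, _, hc⟩ := intermediate_value_Icc hx2 hcont this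
    exact hr c hc

lemma multiset_sign (t : Multiset ℝ) (ht : ∀ μ ∈ t, μ ≠ 1) :
    0 < (-1:ℝ) ^ (Multiset.card (t.filter (fun μ => 1 < μ))) *
      (t.map (fun μ => 1 - μ)).prod := by
  classical
  induction t using Multiset.induction with
  | empty => simp
  | cons a s ih =>
    have ha : a ≠ 1 := ht a (Multiset.mem_cons_self a s)
    have hs := ih (fun μ hμ => ht μ (Multiset.mem_cons_of_mem hμ))
    rw [Multiset.map_cons, Multiset.prod_cons]
    by_cases h1 : 1 < a
    · rw [Multiset.filter_cons_of_pos _ h1, Multiset.card_cons, pow_succ]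
      have : (0:ℝ) < (1 - a) * -1 := by nlinarith
      nlinarith
    · rw [Multiset.filter_cons_of_neg _ h1]
      have : (0:ℝ) < 1 - a := by
        rcases lt_or_eq_of_le (not_lt.mp h1) with h | h
        · linarith
        · exact absurd h ha
      nlinarith

lemma sign_lemma (P : ℝ[X]) (hm : P.Monic) (h1 : P.eval 1 ≠ 0) :
    0 < (-1:ℝ) ^ (Multiset.card (P.roots.filter (fun μ => 1 < μ))) * P.eval 1 := by
  obtain ⟨q, hq⟩ := P.prod_multiset_X_sub_C_dvd
  have hP0 : P ≠ 0 := hm.ne_zero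
  have hq0 : q ≠ 0 := fun h => hP0 (by rw [hq, h, mul_zero])
  have hprodmonic : ((P.roots.map (fun a => X - C a)).prod).Monic :=
    monic_multiset_prod_of_monic _ _ (fun a _ => monic_X_sub_C a)
  have hqm : q.Monic := by
    have h := hm
    rw [Polynomial.Monic] at h ⊢
    rwa [hq, Polynomial.leadingCoeff_mul, hprodmonic.leadingCoeff, one_mul] at h
  have hqroots : q.roots = 0 := by
    have h2 : ((P.roots.map (fun a => X - C a)).prod * q).roots =
        ((P.roots.map (fun a => X - C a)).prod).roots + q.roots :=
      Polynomial.roots_mul (hq ▸ hP0)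
    rw [← hq, Polynomial.roots_multiset_prod_X_sub_C] at h2
    exact left_eq_add.mp h2
  have hqnr : ∀ x : ℝ, ¬ q.IsRoot x := by
    intro x hx
    have : x ∈ q.roots := (Polynomial.mem_roots hq0).mpr hx
    rw [hqroots] at this
    simp at this
  have hqpos := pos_of_no_roots q hqm hqnr 1
  have heval : P.eval 1 = (P.roots.map (fun μ => 1 - μ)).prod * q.eval 1 := by
    conv_lhs => rw [hq]
    rw [Polynomial.eval_mul, Polynomial.eval_multiset_prod, Multiset.map_map]
    congr 1
    exact congrArg _ (Multiset.map_congr rfl (by intro x _; simp))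
  have hne1 : ∀ μ ∈ P.roots, μ ≠ 1 := by
    intro μ hμ he
    apply h1
    have := Polynomial.isRoot_of_mem_roots hμ
    rwa [he] at this
  have hms := multiset_sign P.roots hne1
  rw [heval]
  nlinarith [hms, hqpos]

lemma eval_one_charpoly {k : ℕ} (A : Matrix (Fin k) (Fin k) ℝ) :
    A.charpoly.eval 1 = (1 - A).det := by
  have h := RingHom.map_det (Polynomial.evalRingHom 1) (Matrix.charmatrix A)
  rw [Matrix.charpoly, show Polynomial.eval 1 (Matrix.charmatrix A).det = _ from h,
    RingHom.mapMatrix_apply]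
  congr 1
  ext i j
  by_cases hij : i = j
  · subst hij
    simp [Matrix.charmatrix_apply_eq, Matrix.sub_apply, Matrix.one_apply_eq]
  · simp [Matrix.charmatrix_apply_ne _ _ _ hij, Matrix.sub_apply, Matrix.one_apply_ne hij]

lemma card_filter_abs (t : Multiset ℝ) :
    Multiset.card (t.filter (fun μ => 1 < |μ|)) =
      Multiset.card (t.filter (fun μ => 1 < μ)) +
      Multiset.card (t.filter (fun μ => μ < -1)) := by
  classical
  rw [← Multiset.card_add, Multiset.filter_add_filter]
  have h1 : Multiset.filter (fun a => 1 < a ∨ a < -1) t =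
      Multiset.filter (fun μ => 1 < |μ|) t := by
    refine Multiset.filter_congr (fun x _ => ?_)
    rw [lt_abs, lt_neg]
  have h2 : Multiset.filter (fun a => 1 < a ∧ a < -1) t = 0 := by
    rw [Multiset.filter_eq_nil]
    rintro a _ ⟨h, h'⟩
    linarith
  rw [h1, h2, add_zero]

/-- for a `k×k` integer matrix `M` with `det(I - M) ≠ 0`, letting `p` be the number
of real eigenvalues `μ < -1` and `r` the number of real eigenvalues with `|μ| > 1` (both counted
with algebraic multiplicity, i.e. as roots of the real characteristic polynomial),
`|det(I - M)| = (-1)^(r+p) * ∑_{i=0}^{k} (-1)^i Tr(Λ^i M)`. -/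
theorem stmt7 (k : ℕ) (M : Matrix (Fin k) (Fin k) ℤ) (hdet : (1 - M).det ≠ 0)
    (p r : ℕ)
    (hp : p = (((M.map (Int.cast : ℤ → ℝ)).charpoly.roots).filter (fun μ => μ < -1)).card)
    (hr : r = (((M.map (Int.cast : ℤ → ℝ)).charpoly.roots).filter (fun μ => 1 < |μ|)).card) :
    ((1 - M).det.natAbs : ℤ) =
      (-1) ^ (r + p) * ∑ i ∈ Finset.range (k + 1), (-1) ^ i * (extPow M i).trace := by
  classical
  set A := M.map (Int.cast : ℤ → ℝ) with hA
  set d : ℤ := (1 - M).det with hd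
  -- cast the determinant to ℝ
  have hmap : (1 - M).map (Int.cast : ℤ → ℝ) = 1 - A := by
    ext i j
    by_cases hij : i = j
    · subst hij
      simp [hA, Matrix.map_apply, Matrix.sub_apply, Matrix.one_apply_eq]
    · simp [hA, Matrix.map_apply, Matrix.sub_apply, Matrix.one_apply_ne hij]
  have hcast : ((d : ℤ) : ℝ) = (1 - A).det := by
    rw [hd, ← hmap]
    exact (RingHom.map_det (Int.castRingHom ℝ) (1 - M)).trans rfl
  have hA1 : A.charpoly.eval 1 = ((d : ℤ) : ℝ) := by
    rw [eval_one_charpoly, hcast]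
  have hne : A.charpoly.eval 1 ≠ 0 := by
    rw [hA1]
    exact_mod_cast hdet
  set c : ℕ := Multiset.card (A.charpoly.roots.filter (fun μ => 1 < μ)) with hc
  have hsign : 0 < (-1:ℝ) ^ c * ((d : ℤ) : ℝ) := by
    rw [← hA1]
    exact sign_lemma A.charpoly (Matrix.charpoly_monic A) hne
  -- parity
  have hrp : r + p = c + 2 * p := by
    rw [hr, hp, card_filter_abs, hc]
    ring
  have hpow : ((-1 : ℤ) ^ (r + p)) = (-1 : ℤ) ^ c := by
    rw [hrp, pow_add, pow_mul]
    norm_num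
  -- positivity in ℤ
  have hsignZ : 0 < (-1 : ℤ) ^ c * d := by
    have : ((((-1 : ℤ) ^ c * d : ℤ)) : ℝ) = (-1:ℝ) ^ c * ((d : ℤ) : ℝ) := by push_cast; ring
    exact_mod_cast this ▸ hsign
  have habs : (d.natAbs : ℤ) = (-1 : ℤ) ^ c * d := by
    have h1 : ((-1 : ℤ) ^ c * d) = |(-1 : ℤ) ^ c * d| := (abs_of_pos hsignZ).symm
    rw [h1, abs_mul, abs_pow, abs_neg, abs_one, one_pow, one_mul, Int.abs_eq_natAbs]
  rw [← det_one_sub_eq_sum, ← hd, hpow, ← habs]
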